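/- For every integer n ≥ 3, P_n(x) = x T_{n-1}(x) - T_{n-2}(x), where T_j denotes the Chebyshev polynomial of the first kind of degree j. -/

import Mathlib

open Finset Polynomial Real

noncomputable section

/-- Binomial coefficient `C(a, b)` for integer lower index, zero when `b < 0` or `b > a`. -/
def chooseZ (a : ℕ) (b : ℤ) : ℤ := if 0 ≤ b then (a.choose b.toNat : ℤ) else 0

/-- `f n k m p = ∑_{i=0}^{n} (-1)^i C(n,i) C(np+m-ip, n+k)`. -/
def f (n : ℕ) (k : ℤ) (m p : ℕ) : ℤ :=
  ∑ i ∈ Finset.range (n + 1),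
    (-1) ^ i * (n.choose i : ℤ) * chooseZ (n * p + m - i * p) ((n : ℤ) + k)

/-- The coefficients `c(n,k,m,p)`. -/
def c (n : ℕ) (k : ℤ) (m p : ℕ) : ℤ :=
  if 0 ≤ k ∧ k ≤ (n : ℤ) ∧ (n : ℤ) % 2 = k % 2 ∧ 2 * (m : ℤ) ≤ (n : ℤ) + k then
    (-1) ^ ((((n : ℤ) - k) / 2).toNat) *
      f ((((n : ℤ) + k - 2 * m) / 2).toNat) (((n : ℤ) - k) / 2) m p
  else 0

/-- The polynomial `P_{n,m,p}(x) = ∑_{k=0}^n c(n,k,m,p) x^k`, as a real polynomial. -/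
def P (n m p : ℕ) : Polynomial ℝ :=
  ∑ k ∈ Finset.range (n + 1), Polynomial.C ((c n (k : ℤ) m p : ℝ)) * Polynomial.X ^ k
lemma chooseZ_pascal2 (a : ℕ) (b : ℤ) :
    chooseZ (a+2) b = chooseZ a b + 2 * chooseZ a (b-1) + chooseZ a (b-2) := by
  rcases le_or_gt 0 b with hb | hb
  · lift b to ℕ using hb with j
    match j with
    | 0 => simp [chooseZ]
    | 1 =>
      simp [chooseZ]
    | (j+2) =>
      have h0 : (((j+2 : ℕ):ℤ)-1) = ((j+1 : ℕ) : ℤ) := by push_cast; ring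
      have h1 : (((j+2 : ℕ):ℤ)-2) = ((j : ℕ) : ℤ) := by push_cast; ring
      rw [h0, h1]
      simp only [chooseZ, Int.toNat_natCast, Int.natCast_nonneg, if_pos]
      rw [Nat.choose_succ_succ (a+1), Nat.choose_succ_succ a, Nat.choose_succ_succ a (j+1)]
      push_cast; ring
  · have h1 : b - 1 < 0 := by omega
    have h2 : b - 2 < 0 := by omega
    simp [chooseZ, not_le.2 hb, not_le.2 h1, not_le.2 h2, show ¬ (1:ℤ) ≤ b by omega, show ¬ (2:ℤ) ≤ b by omega]

lemma chooseZ_eq_zero (a : ℕ) (b : ℤ) (h : (a:ℤ) < b) : chooseZ a b = 0 := by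
  have hb : 0 ≤ b := by omega
  simp only [chooseZ, if_pos hb]
  rw [Nat.choose_eq_zero_of_lt (by omega)]
  simp

lemma alt_step (m : ℕ) (A : ℕ → ℤ) :
    ∑ i ∈ range (m+2), (-1)^i * ((m+1).choose i : ℤ) * A i
    = ∑ i ∈ range (m+1), (-1)^i * (m.choose i : ℤ) * (A i - A (i+1)) := by
  rw [Finset.sum_range_succ' (fun i => (-1:ℤ)^i * ((m+1).choose i : ℤ) * A i) (m+1)]
  have h1 : ∀ i ∈ range (m+1), (-1:ℤ)^(i+1) * (((m+1).choose (i+1) : ℕ) : ℤ) * A (i+1)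
      = -((-1)^i * (m.choose i : ℤ) * A (i+1)) + (-1)^(i+1) * (m.choose (i+1) : ℤ) * A (i+1) := by
    intro i _
    rw [Nat.choose_succ_succ]
    push_cast; ring
  rw [Finset.sum_congr rfl h1, Finset.sum_add_distrib]
  have h2 : ∑ i ∈ range (m+1), (-1:ℤ)^(i+1) * (m.choose (i+1) : ℤ) * A (i+1)
      = (∑ i ∈ range (m+2), (-1:ℤ)^i * (m.choose i : ℤ) * A i) - (-1:ℤ)^0 * (m.choose 0 : ℤ) * A 0 := by
    rw [Finset.sum_range_succ' (fun i => (-1:ℤ)^i * (m.choose i : ℤ) * A i) (m+1)]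
    ring
  rw [h2, Finset.sum_range_succ (fun i => (-1:ℤ)^i * (m.choose i : ℤ) * A i) (m+1),
    Nat.choose_succ_self]
  have h3 : ∑ i ∈ range (m+1), (-1:ℤ)^i * (m.choose i : ℤ) * (A i - A (i+1))
      = ∑ i ∈ range (m+1), (((-1:ℤ)^i * (m.choose i : ℤ) * A i) + (-((-1)^i * (m.choose i : ℤ) * A (i+1)))) := by
    apply Finset.sum_congr rfl
    intro i _; ring
  rw [h3, Finset.sum_add_distrib]
  simp only [Nat.choose_zero_right, Nat.cast_one, zero_mul, one_mul, pow_zero]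
  ring

lemma f_succ (N : ℕ) (K : ℤ) : f (N+1) K 2 2 = 2 * f N K 2 2 + f N (K-1) 2 2 := by
  have key : f (N+1) K 2 2
      = ∑ i ∈ range (N+1), (-1)^i * (N.choose i : ℤ) *
          (chooseZ ((N+1)*2+2 - i*2) ((N:ℤ)+1+K) - chooseZ ((N+1)*2+2 - (i+1)*2) ((N:ℤ)+1+K)) := by
    rw [f]
    have : ∀ i ∈ range (N+1+1), (-1:ℤ)^i * ((N+1).choose i : ℤ) *
        chooseZ ((N+1) * 2 + 2 - i * 2) ((N+1 : ℕ) + K)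
        = (-1:ℤ)^i * ((N+1).choose i : ℤ) * (fun i => chooseZ ((N+1)*2+2 - i*2) ((N:ℤ)+1+K)) i := by
      intro i _
      have : ((N+1 : ℕ) : ℤ) + K = (N:ℤ)+1+K := by push_cast; ring
      rw [this]
    rw [Finset.sum_congr rfl this, alt_step N (fun i => chooseZ ((N+1)*2+2 - i*2) ((N:ℤ)+1+K))]
  rw [key]
  have step : ∀ i ∈ range (N+1), (-1:ℤ)^i * (N.choose i : ℤ) *
      (chooseZ ((N+1)*2+2 - i*2) ((N:ℤ)+1+K) - chooseZ ((N+1)*2+2 - (i+1)*2) ((N:ℤ)+1+K))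
      = 2 * ((-1:ℤ)^i * (N.choose i : ℤ) * chooseZ (N*2+2 - i*2) ((N:ℤ)+K))
        + (-1:ℤ)^i * (N.choose i : ℤ) * chooseZ (N*2+2 - i*2) ((N:ℤ)+(K-1)) := by
    intro i hi
    have hi' : i ≤ N := by simpa [Nat.lt_succ_iff] using hi
    have e1 : (N+1)*2+2 - i*2 = (N*2+2 - i*2) + 2 := by omega
    have e2 : (N+1)*2+2 - (i+1)*2 = N*2+2 - i*2 := by omega
    rw [e1, e2, chooseZ_pascal2]
    have e3 : (N:ℤ)+1+K-1 = (N:ℤ)+K := by ring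
    have e4 : (N:ℤ)+1+K-2 = (N:ℤ)+(K-1) := by ring
    rw [e3, e4]
    ring
  rw [Finset.sum_congr rfl step, Finset.sum_add_distrib, ← Finset.mul_sum]
  rw [f, f]

lemma f_neg (N : ℕ) (K : ℤ) (h : K < 0) : f N K 2 2 = 0 := by
  induction N generalizing K with
  | zero =>
    have h0 : ¬ ((0:ℤ) ≤ ((0:ℕ):ℤ) + K) := by push_cast; omega
    simp [f, chooseZ, h0]
    intro hK
    omega
  | succ n ih =>
    rw [f_succ, ih K h, ih (K-1) (by omega)]
    ring

lemma f_big (N : ℕ) (K : ℤ) (h : (N:ℤ)+2 < K) : f N K 2 2 = 0 := by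
  rw [f]
  apply Finset.sum_eq_zero
  intro i hi
  have h1 : (N*2+2 - i*2 : ℕ) ≤ N*2+2 := Nat.sub_le _ _
  have : chooseZ (N*2+2 - i*2) ((N:ℤ)+K) = 0 := by
    apply chooseZ_eq_zero
    have : ((N*2+2 - i*2 : ℕ) : ℤ) ≤ (N:ℤ)*2+2 := by exact_mod_cast h1
    omega
  rw [this]
  ring

lemma c_eq_of (n : ℕ) (k : ℤ)
    (h : 0 ≤ k ∧ k ≤ (n : ℤ) ∧ (n : ℤ) % 2 = k % 2 ∧ 2 * ((2:ℕ) : ℤ) ≤ (n : ℤ) + k) :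
    c n k 2 2 = (-1) ^ ((((n : ℤ) - k) / 2).toNat) *
      f ((((n : ℤ) + k - 2 * (2:ℕ)) / 2).toNat) (((n : ℤ) - k) / 2) 2 2 := by
  rw [c, if_pos h]

lemma c_zero_of (n : ℕ) (k : ℤ)
    (h : ¬(0 ≤ k ∧ k ≤ (n : ℤ) ∧ (n : ℤ) % 2 = k % 2 ∧ 2 * ((2:ℕ) : ℤ) ≤ (n : ℤ) + k)) :
    c n k 2 2 = 0 := by
  rw [c, if_neg h]

lemma c_rec (n : ℕ) (hn : 3 ≤ n) (k : ℤ) (hk : 0 ≤ k) :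
    c (n+2) k 2 2 = 2 * c (n+1) (k-1) 2 2 - c n k 2 2 := by
  by_cases hp : (n:ℤ) % 2 = k % 2
  · -- same parity
    rcases lt_trichotomy k ((n:ℤ)+2) with hlt | heq | hgt
    · by_cases hk0 : k = 0
      · -- k = 0, n even ≥ 4
        subst hk0
        obtain ⟨m, rfl⟩ : ∃ m, n = 2*m+4 := ⟨(n-4)/2, by omega⟩
        rw [c_eq_of (2*m+4+2) 0 (by omega),
          c_zero_of (2*m+4+1) (0-1) (by omega),
          c_eq_of (2*m+4) 0 (by omega)]
        have e1 : (((2*m+4+2 : ℕ) : ℤ) - 0) / 2 = (m:ℤ)+3 := by omega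
        have e2 : ((((2*m+4+2 : ℕ) : ℤ) + 0 - 2*((2:ℕ):ℤ)) / 2).toNat = m+1 := by omega
        have e3 : (((2*m+4 : ℕ) : ℤ) - 0) / 2 = (m:ℤ)+2 := by omega
        have e4 : ((((2*m+4 : ℕ) : ℤ) + 0 - 2*((2:ℕ):ℤ)) / 2).toNat = m := by omega
        rw [e1, e2, e3, e4]
        have e5 : ((m:ℤ)+3).toNat = m+3 := by omega
        have e6 : ((m:ℤ)+2).toNat = m+2 := by omega
        rw [e5, e6]
        have h7 : f (m+1) ((m:ℤ)+3) 2 2 = f m ((m:ℤ)+2) 2 2 := by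
          rw [f_succ, f_big m ((m:ℤ)+3) (by omega)]
          have : (m:ℤ)+3-1 = (m:ℤ)+2 := by ring
          rw [this]; ring
        rw [h7, pow_succ]
        ring
      · -- 1 ≤ k ≤ n (k = n+1 excluded by parity)
        have hkn : k ≤ (n:ℤ) := by omega
        obtain ⟨a, b, N0, hka, hnab, hN0⟩ :
            ∃ a b N0 : ℕ, k = (a:ℤ) ∧ n = a + 2*b ∧ a + b = N0 + 2 :=
          ⟨k.toNat, (n - k.toNat)/2, k.toNat + (n - k.toNat)/2 - 2, by omega, by omega, by omega⟩
        subst hka hnab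
        rw [c_eq_of (a+2*b+2) (a:ℤ) (by omega),
          c_eq_of (a+2*b+1) ((a:ℤ)-1) (by omega),
          c_eq_of (a+2*b) (a:ℤ) (by omega)]
        have e1 : (((a+2*b+2 : ℕ) : ℤ) - a) / 2 = (b:ℤ)+1 := by omega
        have e2 : ((((a+2*b+2 : ℕ) : ℤ) + a - 2*((2:ℕ):ℤ)) / 2).toNat = N0+1 := by omega
        have e3 : (((a+2*b+1 : ℕ) : ℤ) - ((a:ℤ)-1)) / 2 = (b:ℤ)+1 := by omega
        have e4 : ((((a+2*b+1 : ℕ) : ℤ) + ((a:ℤ)-1) - 2*((2:ℕ):ℤ)) / 2).toNat = N0 := by omega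
        have e5 : (((a+2*b : ℕ) : ℤ) - a) / 2 = (b:ℤ) := by omega
        have e6 : ((((a+2*b : ℕ) : ℤ) + a - 2*((2:ℕ):ℤ)) / 2).toNat = N0 := by omega
        rw [e1, e2, e3, e4, e5, e6]
        have e7 : ((b:ℤ)+1).toNat = b+1 := by omega
        have e8 : ((b:ℤ)).toNat = b := by omega
        rw [e7, e8]
        have h9 : f (N0+1) ((b:ℤ)+1) 2 2 = 2 * f N0 ((b:ℤ)+1) 2 2 + f N0 (b:ℤ) 2 2 := by
          rw [f_succ]
          have : (b:ℤ)+1-1 = (b:ℤ) := by ring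
          rw [this]
        rw [h9, pow_succ]
        ring
    · -- k = n+2
      subst heq
      rw [c_eq_of (n+2) ((n:ℤ)+2) (by omega),
        c_eq_of (n+1) ((n:ℤ)+2-1) (by omega),
        c_zero_of n ((n:ℤ)+2) (by omega)]
      have e1 : (((n+2 : ℕ) : ℤ) - ((n:ℤ)+2)) / 2 = 0 := by omega
      have e2 : ((((n+2 : ℕ) : ℤ) + ((n:ℤ)+2) - 2*((2:ℕ):ℤ)) / 2).toNat = n := by omega
      have e3 : (((n+1 : ℕ) : ℤ) - ((n:ℤ)+2-1)) / 2 = 0 := by omega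
      have e4 : ((((n+1 : ℕ) : ℤ) + ((n:ℤ)+2-1) - 2*((2:ℕ):ℤ)) / 2).toNat = n-1 := by omega
      rw [e1, e2, e3, e4]
      obtain ⟨n', rfl⟩ : ∃ n', n = n'+1 := ⟨n-1, by omega⟩
      have e5 : n'+1-1 = n' := by
        omega
      rw [e5]
      have h5 : f (n'+1) 0 2 2 = 2 * f n' 0 2 2 := by
        rw [f_succ, f_neg n' (0-1) (by omega)]
        ring
      rw [h5]
      norm_num
    · -- k ≥ n+3
      rw [c_zero_of (n+2) k (by omega),
        c_zero_of (n+1) (k-1) (by omega),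
        c_zero_of n k (by omega)]
      ring
  · -- parity mismatch
    rw [c_zero_of (n+2) k (by omega),
      c_zero_of (n+1) (k-1) (by omega),
      c_zero_of n k (by omega)]
    ring

lemma Pcoeff (n k : ℕ) : (P n 2 2).coeff k = ((c n (k:ℤ) 2 2 : ℤ) : ℝ) := by
  rw [P, Polynomial.finset_sum_coeff]
  simp only [Polynomial.coeff_C_mul, Polynomial.coeff_X_pow, mul_ite, mul_one, mul_zero]
  rw [Finset.sum_ite_eq (Finset.range (n+1)) k (fun j => ((c n (j:ℤ) 2 2 : ℤ):ℝ))]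
  split_ifs with h
  · rfl
  · rw [c_zero_of]
    · simp
    · have : n < k := by simpa [Finset.mem_range, Nat.lt_succ_iff, not_le] using h
      push_cast
      omega

lemma P_rec (n : ℕ) (hn : 3 ≤ n) :
    P (n+2) 2 2 = 2 * Polynomial.X * P (n+1) 2 2 - P n 2 2 := by
  have h2 : (2 * Polynomial.X * P (n+1) 2 2 : ℝ[X]) = Polynomial.C 2 * (Polynomial.X * P (n+1) 2 2) := by
    rw [map_ofNat]
    ring
  ext k
  rw [Polynomial.coeff_sub, h2, Polynomial.coeff_C_mul, Pcoeff]
  match k with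
  | 0 =>
    rw [Polynomial.mul_coeff_zero, Polynomial.coeff_X_zero, zero_mul, mul_zero, Pcoeff n 0]
    have := c_rec n hn 0 le_rfl
    have hz : c (n+1) (0-1) 2 2 = 0 := c_zero_of _ _ (by omega)
    rw [hz] at this
    push_cast [this]
    ring
  | (k+1) =>
    rw [Polynomial.coeff_X_mul, Pcoeff, Pcoeff]
    have := c_rec n hn ((k:ℤ)+1) (by omega)
    have e : ((k:ℤ)+1) - 1 = (k:ℤ) := by ring
    rw [e] at this
    have e2 : (((k+1 : ℕ)) : ℤ) = (k:ℤ)+1 := by push_cast; ring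
    rw [e2, this]
    push_cast
    ring

lemma P3 : P 3 2 2 = 2 * Polynomial.X ^ 3 - 2 * Polynomial.X := by
  have h0 : c 3 0 2 2 = 0 := by decide
  have h1 : c 3 1 2 2 = -2 := by decide
  have h2 : c 3 2 2 2 = 0 := by decide
  have h3 : c 3 3 2 2 = 2 := by decide
  rw [P]
  rw [Finset.sum_range_succ, Finset.sum_range_succ, Finset.sum_range_succ, Finset.sum_range_one]
  push_cast [h0, h1, h2, h3]
  simp only [map_zero, map_neg, map_ofNat, map_one]
  ring

lemma P4 : P 4 2 2 = 4 * Polynomial.X ^ 4 - 5 * Polynomial.X ^ 2 + 1 := by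
  have h0 : c 4 0 2 2 = 1 := by decide
  have h1 : c 4 1 2 2 = 0 := by decide
  have h2 : c 4 2 2 2 = -5 := by decide
  have h3 : c 4 3 2 2 = 0 := by decide
  have h4 : c 4 4 2 2 = 4 := by decide
  rw [P]
  rw [Finset.sum_range_succ, Finset.sum_range_succ, Finset.sum_range_succ,
    Finset.sum_range_succ, Finset.sum_range_one]
  push_cast [h0, h1, h2, h3, h4]
  simp only [map_zero, map_neg, map_ofNat, map_one]
  ring

/-- For n ≥ 3, `P_n(x) = x T_{n-1}(x) - T_{n-2}(x)`. -/
theorem statement12 (n : ℕ) (hn : 3 ≤ n) :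
    P n 2 2 = Polynomial.X * Polynomial.Chebyshev.T ℝ ((n : ℤ) - 1)
      - Polynomial.Chebyshev.T ℝ ((n : ℤ) - 2) := by

  induction n using Nat.strong_induction_on with
  | _ n ih =>
    match n, hn with
    | 3, _ =>
      rw [P3]
      norm_num [Polynomial.Chebyshev.T_two, Polynomial.Chebyshev.T_one]
      ring
    | 4, _ =>
      rw [P4]
      push_cast
      have h3 : Polynomial.Chebyshev.T ℝ (3:ℤ) = Polynomial.Chebyshev.T ℝ (1+2) := by norm_num
      rw [h3, Polynomial.Chebyshev.T_add_two]
      norm_num [Polynomial.Chebyshev.T_two, Polynomial.Chebyshev.T_one]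
      ring
    | (n+5), _ =>
      have e1 : n+5 = (n+3)+2 := by omega
      rw [e1, P_rec (n+3) (by omega)]
      rw [ih (n+4) (by omega) (by omega), ih (n+3) (by omega) (by omega)]
      have t1 : Polynomial.Chebyshev.T ℝ ((((n:ℤ)+3)+2) - 1) =
          2 * Polynomial.X * Polynomial.Chebyshev.T ℝ (((n:ℤ)+4) - 1)
            - Polynomial.Chebyshev.T ℝ (((n:ℤ)+3) - 1) := by
        have := Polynomial.Chebyshev.T_add_two ℝ ((n:ℤ)+2)
        have e : (((n:ℤ)+3)+2) - 1 = ((n:ℤ)+2)+2 := by ring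
        have e2 : ((n:ℤ)+4) - 1 = ((n:ℤ)+2)+1 := by ring
        have e3 : ((n:ℤ)+3) - 1 = ((n:ℤ)+2) := by ring
        rw [e, e2, e3, this]
      have t2 : Polynomial.Chebyshev.T ℝ ((((n:ℤ)+3)+2) - 2) =
          2 * Polynomial.X * Polynomial.Chebyshev.T ℝ (((n:ℤ)+4) - 2)
            - Polynomial.Chebyshev.T ℝ (((n:ℤ)+3) - 2) := by
        have := Polynomial.Chebyshev.T_add_two ℝ ((n:ℤ)+1)
        have e : (((n:ℤ)+3)+2) - 2 = ((n:ℤ)+1)+2 := by ring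
        have e2 : ((n:ℤ)+4) - 2 = ((n:ℤ)+1)+1 := by ring
        have e3 : ((n:ℤ)+3) - 2 = ((n:ℤ)+1) := by ring
        rw [e, e2, e3, this]
      have e4 : ((((n+3:ℕ))+2 : ℕ) : ℤ) = (((n:ℤ)+3)+2) := by push_cast; ring
      have e5 : (((n+4:ℕ)) : ℤ) = ((n:ℤ)+4) := by push_cast; ring
      have e6 : (((n+3:ℕ)) : ℤ) = ((n:ℤ)+3) := by push_cast; ring
      rw [e4, e5, e6, t1, t2]
      ring
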